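/- For every 0 < ξ ≤ 1/4 and every positive integer k there exists ℓ ∈ ℕ such that for all integers n ≥ ℓ the following holds. Let (n_i)_{i∈[k]}, (a_j)_{j∈[ℓ]}, and (b_j)_{j∈[ℓ]} be partitions of n into nonnegative integers such that n_i ≤ n/8 for all i ∈ [k] and a_j + b_j ≤ (1+ξ)·2n/ℓ for all j ∈ [ℓ]. Then there exists a map φ : [ℓ] → [k] such that for every i ∈ [k], writing ā_i = Σ_{j ∈ φ⁻¹(i)} a_j and b̄_i = Σ_{j ∈ φ⁻¹(i)} b_j, we have ā_i < n_i + ξn and b̄_i < n_i + ξn. -/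

import Mathlib

open Finset

lemma list_map_sum_sub {ι : Type*} (l : List ι) (f g : ι → ℤ) :
    (l.map (fun x => f x - g x)).sum = (l.map f).sum - (l.map g).sum := by
  induction l with
  | nil => simp
  | cons x l ih => simp [ih]; ring

lemma balance {ι : Type*} [DecidableEq ι] (f : ι → ℤ) (M : ℤ) :
    ∀ (n : ℕ) (l : List ι) (P : ℤ), l.length = n → |P| ≤ M → (∀ x ∈ l, |f x| ≤ M) →
    P + (l.map f).sum = 0 →
    ∃ l' : List ι, l'.Perm l ∧ ∀ t, |P + ((l'.take t).map f).sum| ≤ M := by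
  intro n
  induction n with
  | zero =>
    intro l P hl hP hf hsum
    exact ⟨[], by simp [List.length_eq_zero_iff.mp hl], fun t => by simpa using hP⟩
  | succ n ih =>
    intro l P hl hP hf hsum
    have hln : l ≠ [] := by intro h; simp [h] at hl
    have hMpos : (0:ℤ) ≤ M := le_trans (abs_nonneg P) hP
    -- find suitable x
    have hx : ∃ x ∈ l, (0 ≤ P ∧ f x ≤ 0) ∨ (P < 0 ∧ 0 ≤ f x) := by
      rcases le_or_gt 0 P with hP0 | hP0
      · by_contra hc
        push_neg at hc
        have hall : ∀ y ∈ l.map f, 1 ≤ y := by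
          intro y hy
          obtain ⟨x, hxl, rfl⟩ := List.mem_map.mp hy
          have := hc x hxl
          omega
        have hs : ((n:ℤ)+1) • (1:ℤ) ≤ (l.map f).sum := by
          have := List.card_nsmul_le_sum (l.map f) 1 hall
          simpa [hl] using this
        simp at hs
        omega
      · by_contra hc
        push_neg at hc
        have hall : ∀ y ∈ l.map f, y ≤ -1 := by
          intro y hy
          obtain ⟨x, hxl, rfl⟩ := List.mem_map.mp hy
          have := hc x hxl
          omega
        have hs : (l.map f).sum ≤ ((n:ℤ)+1) • (-1:ℤ) := by
          have := List.sum_le_card_nsmul (l.map f) (-1) hall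
          simpa [hl] using this
        simp at hs
        omega
    obtain ⟨x, hxl, hxc⟩ := hx
    have hperm : l.Perm (x :: l.erase x) := List.perm_cons_erase hxl
    have hlen' : (l.erase x).length = n := by
      have := List.length_erase_of_mem hxl
      omega
    have hsum' : (P + f x) + ((l.erase x).map f).sum = 0 := by
      have := hperm.map f |>.sum_eq
      simp at this
      omega
    have hP' : |P + f x| ≤ M := by
      have hfx := hf x hxl
      rw [abs_le] at hP hfx ⊢
      rcases hxc with ⟨h1, h2⟩ | ⟨h1, h2⟩ <;> omega
    obtain ⟨l'', hp'', hpre''⟩ := ih (l.erase x) (P + f x) hlen' hP'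
      (fun y hy => hf y (List.mem_of_mem_erase hy)) hsum'
    refine ⟨x :: l'', (hp''.cons x).trans hperm.symm, ?_⟩
    intro t
    cases t with
    | zero => simpa using hP
    | succ t =>
      simp only [List.take_succ_cons, List.map_cons, List.sum_cons]
      have := hpre'' t
      calc |P + (f x + ((l''.take t).map f).sum)| = |(P + f x) + ((l''.take t).map f).sum| := by ring_nf
      _ ≤ M := this

lemma telescope (F : ℕ → ℤ) (hmono : ∀ t, F t ≤ F (t+1)) (T : Finset ℕ) (hne : T.Nonempty)
    (lo hi : ℤ) (h : ∀ t ∈ T, lo ≤ F t ∧ F (t+1) ≤ hi) :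
    ∑ t ∈ T, (F (t+1) - F t) ≤ hi - lo := by
  set t0 := T.min' hne with ht0
  set t1 := T.max' hne with ht1
  have hsub : T ⊆ Finset.Icc t0 t1 := fun t ht =>
    Finset.mem_Icc.mpr ⟨T.min'_le t ht, T.le_max' t ht⟩
  have h1 : ∑ t ∈ T, (F (t+1) - F t) ≤ ∑ t ∈ Finset.Icc t0 t1, (F (t+1) - F t) := by
    apply Finset.sum_le_sum_of_subset_of_nonneg hsub
    intro t _ _
    have := hmono t; omega
  have hIcc : Finset.Icc t0 t1 = Finset.Ico t0 (t1+1) := rfl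
  have h01 : t0 ≤ t1 + 1 := le_trans (T.min'_le _ (T.max'_mem hne)) (Nat.le_succ _)
  have h2 : ∑ t ∈ Finset.Ico t0 (t1+1), (F (t+1) - F t) = F (t1+1) - F t0 := by
    rw [Finset.sum_Ico_eq_sub _ h01, Finset.sum_range_sub, Finset.sum_range_sub]
    ring
  have hlo := (h t0 (T.min'_mem hne)).1
  have hhi := (h t1 (T.max'_mem hne)).2
  rw [hIcc, h2] at h1
  omega

theorem stmt_4 (ξ : ℝ) (hξ0 : 0 < ξ) (hξ : ξ ≤ 1 / 4) (k : ℕ) (hk : 0 < k) :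
    ∃ ℓ : ℕ, 0 < ℓ ∧ ∀ n : ℕ, ℓ ≤ n →
      ∀ (ni : Fin k → ℕ) (a b : Fin ℓ → ℕ),
        (∑ i, ni i = n) → (∑ j, a j = n) → (∑ j, b j = n) →
        (∀ i, (ni i : ℝ) ≤ (n : ℝ) / 8) →
        (∀ j, ((a j : ℝ) + (b j : ℝ)) ≤ (1 + ξ) * (2 * (n : ℝ) / ℓ)) →
        ∃ φ : Fin ℓ → Fin k, ∀ i : Fin k,
          ((∑ j ∈ Finset.univ.filter (fun j => φ j = i), a j : ℕ) : ℝ) < (ni i : ℝ) + ξ * n ∧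
          ((∑ j ∈ Finset.univ.filter (fun j => φ j = i), b j : ℕ) : ℝ) < (ni i : ℝ) + ξ * n := by
  classical
  obtain ⟨L, hL9, hL1⟩ : ∃ L : ℕ, 9/ξ ≤ (L:ℝ) ∧ 0 < L :=
    ⟨⌈(9:ℝ)/ξ⌉₊, Nat.le_ceil _, Nat.ceil_pos.mpr (by positivity)⟩
  refine ⟨L, hL1, ?_⟩
  intro n hn ni a b hsni hsa hsb hni8 hab
  have hn1 : 0 < n := lt_of_lt_of_le hL1 hn
  have hnR : (0:ℝ) < n := by exact_mod_cast hn1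
  have hLR : (0:ℝ) < L := by exact_mod_cast hL1
  set M : ℕ := Finset.univ.sup (fun j : Fin L => a j + b j) with hMdef
  have hjM : ∀ j, a j + b j ≤ M := fun j => Finset.le_sup (f := fun j => a j + b j) (Finset.mem_univ j)
  -- 3M < ξ n
  have hMR : 3 * (M:ℝ) < ξ * n := by
    obtain ⟨j, -, hj⟩ := Finset.exists_mem_eq_sup (Finset.univ : Finset (Fin L))
      ⟨⟨0, hL1⟩, Finset.mem_univ _⟩ (fun j => a j + b j)
    have h1 : (M:ℝ) ≤ (1+ξ) * (2*(n:ℝ)/L) := by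
      rw [hMdef, hj]; push_cast; exact hab j
    have h2 : (9:ℝ) ≤ ξ * L := by
      have := (div_le_iff₀ hξ0).mp hL9
      linarith
    have h3 : (M:ℝ) * L ≤ (1+ξ) * (2*n) := by
      have := mul_le_mul_of_nonneg_right h1 (le_of_lt hLR)
      calc (M:ℝ)*L ≤ (1+ξ)*(2*(n:ℝ)/L)*L := this
        _ = (1+ξ)*(2*n) := by field_simp
    have h4 : 3*((M:ℝ)) * L < (ξ*n) * L := by
      nlinarith [mul_le_mul_of_nonneg_left h2 hnR.le, mul_le_mul_of_nonneg_left hξ (by positivity : (0:ℝ) ≤ 6*n)]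
    nlinarith [h4, hLR]
  -- balanced ordering
  obtain ⟨l, hperm, hpre⟩ := balance (fun j : Fin L => (a j:ℤ) - b j) (M:ℤ) L (List.finRange L) 0
    (by simp)
    (by simp)
    (fun x _ => by rw [abs_sub_le_iff]; constructor <;> (have := hjM x; omega))
    (by
      rw [zero_add, ← List.ofFn_eq_map, List.sum_ofFn]
      simp [Finset.sum_sub_distrib, ← Nat.cast_sum, hsa, hsb])
  have hlen : l.length = L := by rw [hperm.length_eq, List.length_finRange]
  have hnd : l.Nodup := hperm.nodup_iff.mpr (List.nodup_finRange L)
  have hmem : ∀ j : Fin L, j ∈ l := fun j => hperm.mem_iff.mpr (List.mem_finRange j)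
  set A : ℕ → ℤ := fun t => ((l.take t).map (fun j => (a j:ℤ))).sum with hA
  set B : ℕ → ℤ := fun t => ((l.take t).map (fun j => (b j:ℤ))).sum with hB
  have hstep : ∀ (c : Fin L → ℕ) (t : ℕ) (ht : t < l.length),
      ((l.take (t+1)).map (fun j => (c j:ℤ))).sum
        = ((l.take t).map (fun j => (c j:ℤ))).sum + c (l.get ⟨t, ht⟩) := by
    intro c t ht
    rw [List.take_succ, List.getElem?_eq_getElem ht, List.map_append, List.sum_append]
    simp [List.get_eq_getElem]
  have hmonoc : ∀ (c : Fin L → ℕ) (t : ℕ),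
      ((l.take t).map (fun j => (c j:ℤ))).sum ≤ ((l.take (t+1)).map (fun j => (c j:ℤ))).sum := by
    intro c t
    by_cases ht : t < l.length
    · rw [hstep c t ht]
      have : (0:ℤ) ≤ c (l.get ⟨t, ht⟩) := Int.ofNat_nonneg _
      omega
    · rw [List.take_of_length_le (by omega), List.take_of_length_le (by omega)]
  have hAmono : Monotone A := monotone_nat_of_le_succ (fun t => hmonoc a t)
  have hBmono : Monotone B := monotone_nat_of_le_succ (fun t => hmonoc b t)
  have htot : ∀ (c : Fin L → ℕ), (l.map (fun j => (c j:ℤ))).sum = ∑ j, (c j:ℤ) := by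
    intro c
    rw [(hperm.map _).sum_eq, ← List.ofFn_eq_map, List.sum_ofFn]
  have hAL : A L = (n:ℤ) := by
    show ((l.take L).map _).sum = _
    rw [List.take_of_length_le (by omega), htot a]
    simp [← Nat.cast_sum, hsa]
  have hA0 : ∀ t, 0 ≤ A t := by
    intro t
    apply List.sum_nonneg
    intro x hx
    obtain ⟨j, -, rfl⟩ := List.mem_map.mp hx
    exact Int.ofNat_nonneg _
  have hD : ∀ t, |A t - B t| ≤ (M:ℤ) := by
    intro t
    have h := hpre t
    rw [zero_add, list_map_sum_sub] at h
    exact h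
  -- cumulative bin sizes
  set nn : ℕ → ℤ := fun m => if h : m < k then (ni ⟨m,h⟩ : ℤ) else 0 with hnn
  set N : ℕ → ℤ := fun i => ∑ m ∈ Finset.range i, nn m with hN
  have hNk : N k = (n:ℤ) := by
    show ∑ m ∈ Finset.range k, nn m = _
    rw [← Fin.sum_univ_eq_sum_range nn k]
    have he : ∀ i : Fin k, nn (i:ℕ) = ((ni i : ℕ):ℤ) := by
      intro i
      simp only [hnn]
      rw [dif_pos i.isLt, Fin.eta]
    rw [Finset.sum_congr rfl (fun i _ => he i)]
    simp [← Nat.cast_sum, hsni]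
  have hNstep : ∀ i : Fin k, N ((i:ℕ)+1) = N (i:ℕ) + (ni i:ℤ) := by
    intro i
    show ∑ m ∈ Finset.range ((i:ℕ)+1), nn m = _
    rw [Finset.sum_range_succ]
    simp [hnn, i.isLt]; rfl
  have hN0 : N 0 = 0 := by simp [hN]
  -- bin assignment by thresholds
  have hTne : ∀ t, ((Finset.range k).filter (fun i => N i ≤ A t)).Nonempty := by
    intro t
    exact ⟨0, Finset.mem_filter.mpr ⟨Finset.mem_range.mpr hk, by rw [hN0]; exact hA0 t⟩⟩
  set binOf : ℕ → ℕ := fun t => ((Finset.range k).filter (fun i => N i ≤ A t)).max' (hTne t) with hbin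
  have hbin_mem : ∀ t, binOf t ∈ (Finset.range k).filter (fun i => N i ≤ A t) :=
    fun t => Finset.max'_mem _ _
  have hbin_lt : ∀ t, binOf t < k := fun t => Finset.mem_range.mp (Finset.mem_filter.mp (hbin_mem t)).1
  have hbin_lo : ∀ t, N (binOf t) ≤ A t := fun t => (Finset.mem_filter.mp (hbin_mem t)).2
  have hbin_hi : ∀ t, t < L → A (t+1) ≤ N (binOf t + 1) + M := by
    intro t ht
    by_cases hik : binOf t + 1 < k
    · have hnotin : ¬ (N (binOf t + 1) ≤ A t) := by
        intro hle
        have : binOf t + 1 ≤ binOf t :=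
          Finset.le_max' _ _ (Finset.mem_filter.mpr ⟨Finset.mem_range.mpr hik, hle⟩)
        omega
      push_neg at hnotin
      have htl : t < l.length := by omega
      have hstepA : A (t+1) = A t + (a (l.get ⟨t, htl⟩):ℤ) := hstep a t htl
      have haM : a (l.get ⟨t, htl⟩) + b (l.get ⟨t, htl⟩) ≤ M := hjM _
      omega
    · have hek : binOf t + 1 = k := by have := hbin_lt t; omega
      rw [hek, hNk]
      have h1 : A (t+1) ≤ A L := hAmono (by omega)
      rw [hAL] at h1
      omega
  set φ : Fin L → Fin k := fun j => ⟨binOf (l.idxOf j), hbin_lt _⟩ with hφ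
  refine ⟨φ, ?_⟩
  intro i
  set T : Finset ℕ := (Finset.range L).filter (fun t => binOf t = (i:ℕ)) with hT
  have hidx : ∀ j : Fin L, l.idxOf j < l.length := fun j => List.idxOf_lt_length_iff.mpr (hmem j)
  -- main bound, generic in the coordinate
  have main : ∀ (c : Fin L → ℕ) (F : ℕ → ℤ) (lo hi : ℤ), Monotone F →
      (∀ (t : ℕ) (ht : t < l.length), F (t+1) = F t + c (l.get ⟨t, ht⟩)) →
      (∀ t ∈ T, lo ≤ F t ∧ F (t+1) ≤ hi) →
      (∑ j ∈ Finset.univ.filter (fun j => φ j = i), (c j:ℤ)) ≤ hi - lo ∨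
        (∑ j ∈ Finset.univ.filter (fun j => φ j = i), (c j:ℤ)) = 0 := by
    intro c F lo hi hFmono hFstep hbound
    by_cases hTe : T.Nonempty
    · left
      have h1 : ∑ j ∈ Finset.univ.filter (fun j => φ j = i), (c j:ℤ)
          = ∑ t ∈ T, (F (t+1) - F t) := by
        apply Finset.sum_nbij' (i := fun j => l.idxOf j)
          (j := fun t => if h : t < l.length then l.get ⟨t, h⟩ else l.get ⟨0, by omega⟩)
        · intro j hj
          have hji : binOf (l.idxOf j) = (i:ℕ) :=
            Fin.ext_iff.mp ((Finset.mem_filter.mp hj).2)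
          exact Finset.mem_filter.mpr ⟨Finset.mem_range.mpr (by have := hidx j; omega), hji⟩
        · intro t ht
          have htL : t < l.length := by
            have := Finset.mem_range.mp (Finset.mem_filter.mp ht).1; omega
          rw [dif_pos htL]
          refine Finset.mem_filter.mpr ⟨Finset.mem_univ _, ?_⟩
          apply Fin.ext
          show binOf (l.idxOf (l.get ⟨t, htL⟩)) = (i:ℕ)
          rw [List.get_idxOf hnd]
          exact (Finset.mem_filter.mp ht).2
        · intro j _
          rw [dif_pos (hidx j)]
          exact List.idxOf_get (hidx j)
        · intro t ht
          have htL : t < l.length := by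
            have := Finset.mem_range.mp (Finset.mem_filter.mp ht).1; omega
          rw [dif_pos htL]
          exact List.get_idxOf hnd _
        · intro j _
          have h := hFstep (l.idxOf j) (hidx j)
          rw [List.idxOf_get (hidx j)] at h
          omega
      rw [h1]
      have hFm : ∀ t, F t ≤ F (t+1) := fun t => hFmono (Nat.le_succ t)
      exact telescope F hFm T hTe lo hi hbound
    · right
      have hempty : Finset.univ.filter (fun j => φ j = i) = ∅ := by
        apply Finset.filter_eq_empty_iff.mpr
        intro j _
        intro hφj
        apply hTe
        refine ⟨l.idxOf j, Finset.mem_filter.mpr ⟨Finset.mem_range.mpr (by have := hidx j; omega), ?_⟩⟩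
        exact Fin.ext_iff.mp hφj
      rw [hempty]
      simp
  -- bounds for membership in T
  have hTa : ∀ t ∈ T, N (i:ℕ) ≤ A t ∧ A (t+1) ≤ N ((i:ℕ)+1) + M := by
    intro t ht
    obtain ⟨htr, hti⟩ := Finset.mem_filter.mp ht
    have htL := Finset.mem_range.mp htr
    constructor
    · have := hbin_lo t; rw [hti] at this; exact this
    · have := hbin_hi t htL; rw [hti] at this; exact this
  have hTb : ∀ t ∈ T, N (i:ℕ) - M ≤ B t ∧ B (t+1) ≤ N ((i:ℕ)+1) + 2*M := by
    intro t ht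
    obtain ⟨h1, h2⟩ := hTa t ht
    have hd1 := hD t
    have hd2 := hD (t+1)
    rw [abs_le] at hd1 hd2
    constructor <;> omega
  have hMz : (0:ℤ) ≤ (M:ℤ) := Int.ofNat_nonneg _
  have castA : ((∑ j ∈ Finset.univ.filter (fun j => φ j = i), a j : ℕ):ℤ)
      = ∑ j ∈ Finset.univ.filter (fun j => φ j = i), (a j:ℤ) := by push_cast; ring
  have castB : ((∑ j ∈ Finset.univ.filter (fun j => φ j = i), b j : ℕ):ℤ)
      = ∑ j ∈ Finset.univ.filter (fun j => φ j = i), (b j:ℤ) := by push_cast; ring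
  have hMRR : (0:ℝ) ≤ (M:ℝ) := Nat.cast_nonneg _
  constructor
  · rcases main a A (N (i:ℕ)) (N ((i:ℕ)+1) + M) hAmono (hstep a) hTa with h | h
    · have hz : ((∑ j ∈ Finset.univ.filter (fun j => φ j = i), a j : ℕ):ℤ) ≤ (ni i:ℤ) + 3*M := by
        rw [castA]
        have := hNstep i
        omega
      have hr : ((∑ j ∈ Finset.univ.filter (fun j => φ j = i), a j : ℕ):ℝ) ≤ (ni i:ℝ) + 3*M := by
        exact_mod_cast hz
      linarith
    · have hz : (∑ j ∈ Finset.univ.filter (fun j => φ j = i), a j : ℕ) = 0 := by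
        have := castA.trans h
        exact_mod_cast this
      rw [hz]
      have : (0:ℝ) < (ni i:ℝ) + ξ*n := by positivity
      simpa using this
  · rcases main b B (N (i:ℕ) - M) (N ((i:ℕ)+1) + 2*M) hBmono (hstep b) hTb with h | h
    · have hz : ((∑ j ∈ Finset.univ.filter (fun j => φ j = i), b j : ℕ):ℤ) ≤ (ni i:ℤ) + 3*M := by
        rw [castB]
        have := hNstep i
        omega
      have hr : ((∑ j ∈ Finset.univ.filter (fun j => φ j = i), b j : ℕ):ℝ) ≤ (ni i:ℝ) + 3*M := by
        exact_mod_cast hz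
      linarith
    · have hz : (∑ j ∈ Finset.univ.filter (fun j => φ j = i), b j : ℕ) = 0 := by
        have := castB.trans h
        exact_mod_cast this
      rw [hz]
      have : (0:ℝ) < (ni i:ℝ) + ξ*n := by positivity
      simpa using this
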